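/- If X₀ and X are two solutions of Aᵀ X - Xᵀ A = B, then X - X₀ can be written as (1 - P₂ᵀ) Y + S A for some matrix Y and some matrix S with Sᵀ = S and S = P₂ᵀ S P₂, where P₂ = AG for a generalized inverse G of A. -/
import Mathlib


/-- Any two solutions of `Aᵀ X - Xᵀ A = B` differ by `(1 - P₂ᵀ) Y + S A` for some
`Y` and some symmetric `S` with `S = P₂ᵀ S P₂`, where `P₂ = A*G` for a generalized
inverse `G` of `A`. -/
theorem matrixeqn_solution_ambiguity {n : ℕ} {F : Type*} [Field F]
    (hchar : (2 : F) ≠ 0)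
    (A B X X₀ G : Matrix (Fin n) (Fin n) F)
    (h1 : A * G * A = A) (h2 : G * A * G = G)
    (hX : A.transpose * X - X.transpose * A = B)
    (hX₀ : A.transpose * X₀ - X₀.transpose * A = B) :
    ∃ Y S : Matrix (Fin n) (Fin n) F,
      X - X₀ = (1 - (A * G).transpose) * Y + S * A ∧
      S.transpose = S ∧ S = (A * G).transpose * S * (A * G) := by
  set D := X - X₀ with hDdef
  have hD : A.transpose * D - D.transpose * A = 0 := by
    have h := hX.trans hX₀.symm
    simp only [hDdef, Matrix.transpose_sub, mul_sub, sub_mul]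
    rw [sub_eq_zero]
    rw [sub_eq_sub_iff_add_eq_add] at h ⊢
    rw [h, add_comm]
  have hD' : A.transpose * D = D.transpose * A := sub_eq_zero.mp hD
  refine ⟨D, G.transpose * (A.transpose * D) * G, ?_, ?_, ?_⟩
  · have key : G.transpose * (A.transpose * D) * G * A = G.transpose * (A.transpose * D) := by
      rw [hD']
      calc G.transpose * (D.transpose * A) * G * A
          = G.transpose * D.transpose * (A * G * A) := by noncomm_ring
        _ = G.transpose * (D.transpose * A) := by rw [h1]; noncomm_ring
    rw [key, Matrix.transpose_mul, sub_mul, one_mul]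
    noncomm_ring
  · rw [Matrix.transpose_mul, Matrix.transpose_mul, Matrix.transpose_transpose,
      Matrix.transpose_mul, Matrix.transpose_transpose, ← hD']
    noncomm_ring
  · have h1t : A.transpose * G.transpose * A.transpose = A.transpose := by
      calc A.transpose * G.transpose * A.transpose = (A * (G * A)).transpose := by
            simp [Matrix.transpose_mul, mul_assoc]
        _ = A.transpose := by rw [← mul_assoc, h1]
    calc G.transpose * (A.transpose * D) * G
        = G.transpose * ((A.transpose * G.transpose * A.transpose) * D) * (G * A * G) := by
          rw [h1t, h2]
      _ = (A * G).transpose * (G.transpose * (A.transpose * D) * G) * (A * G) := by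
          simp only [Matrix.transpose_mul]; noncomm_ring
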